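/- Define the P-positions of Blocking-k Wythoff Nim recursively: a position is P if strictly fewer than k of its Wythoff Nim options are P. For k = 2, the set of P-positions equals R₂ = {(0,0)} ∪ {(n,2n+1),(2n+1,n) : n ∈ ℕ₀} ∪ {(2⌊φn⌋+2, 2⌊φ²n⌋+2),(2⌊φ²n⌋+2, 2⌊φn⌋+2) : n ∈ ℕ₀}. -/

import Mathlib

/-- `q` is a Wythoff Nim option of `p`: a horizontal, vertical or diagonal move. -/
def IsOption (q p : ℕ × ℕ) : Prop :=
  (q.1 < p.1 ∧ q.2 = p.2) ∨ (q.1 = p.1 ∧ q.2 < p.2) ∨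
  (q.1 < p.1 ∧ q.2 < p.2 ∧ p.1 - q.1 = p.2 - q.2)

lemma IsOption.sum_lt {q p : ℕ × ℕ} (h : IsOption q p) : q.1 + q.2 < p.1 + p.2 := by
  rcases h with ⟨h1, h2⟩ | ⟨h1, h2⟩ | ⟨h1, h2, _⟩ <;> omega

/-- A position of Blocking-k Wythoff Nim is a P-position iff strictly fewer than
`k` of its options are P-positions. -/
def IsP (k : ℕ) (p : ℕ × ℕ) : Prop :=
  Set.ncard {q : ℕ × ℕ | ∃ _ : IsOption q p, IsP k q} < k
termination_by p.1 + p.2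
decreasing_by exact IsOption.sum_lt ‹_›

noncomputable def goldenPhi : ℝ := (1 + Real.sqrt 5) / 2

/-- The candidate set of P-positions of Blocking-2 Wythoff Nim. -/
def R2 : Set (ℕ × ℕ) :=
  {(0, 0)} ∪
  {p | ∃ n : ℕ, p = (n, 2 * n + 1) ∨ p = (2 * n + 1, n)} ∪
  {p | ∃ n : ℕ, p = (2 * ⌊goldenPhi * n⌋₊ + 2, 2 * ⌊goldenPhi ^ 2 * n⌋₊ + 2) ∨
                p = (2 * ⌊goldenPhi ^ 2 * n⌋₊ + 2, 2 * ⌊goldenPhi * n⌋₊ + 2)}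





noncomputable def Wf (n : ℕ) : ℕ := ⌊goldenPhi * n⌋₊

lemma goldenPhi_eq : goldenPhi = Real.goldenRatio := rfl

lemma one_lt_goldenPhi : 1 < goldenPhi := Real.one_lt_goldenRatio

lemma goldenPhi_sq : goldenPhi ^ 2 = goldenPhi + 1 := Real.goldenRatio_sq

lemma Wf_zero : Wf 0 = 0 := by simp [Wf]

lemma le_Wf (n : ℕ) : n ≤ Wf n := by
  rw [Wf]
  refine Nat.le_floor ?_
  calc (n:ℝ) = 1 * n := by ring
  _ ≤ goldenPhi * n :=
      mul_le_mul_of_nonneg_right one_lt_goldenPhi.le (Nat.cast_nonneg n)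

lemma Wf_strictMono : StrictMono Wf := by
  apply strictMono_nat_of_lt_succ
  intro n
  have h1 : (Wf n : ℝ) ≤ goldenPhi * n := Nat.floor_le (mul_nonneg (by linarith [one_lt_goldenPhi]) (Nat.cast_nonneg n))
  have : (Wf n + 1 : ℝ) ≤ goldenPhi * (n+1) := by
    push_cast
    nlinarith [one_lt_goldenPhi]
  have := Nat.le_floor (by exact_mod_cast this : ((Wf n + 1 : ℕ) : ℝ) ≤ goldenPhi * ((n+1:ℕ):ℝ))
  simpa [Wf] using this

lemma floor_sq (n : ℕ) : ⌊goldenPhi ^ 2 * n⌋₊ = Wf n + n := by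
  rw [goldenPhi_sq, add_mul, one_mul, Wf]
  rw [Nat.floor_add_natCast (mul_nonneg (by linarith [one_lt_goldenPhi]) (Nat.cast_nonneg n))]

lemma goldenPhi_pos : (0:ℝ) < goldenPhi := by linarith [one_lt_goldenPhi]

lemma Wf_cast (n : ℕ) : (Wf n : ℤ) = beattySeq goldenPhi n := by
  rw [Wf, beattySeq, mul_comm]
  exact Int.natCast_floor_eq_floor (mul_nonneg (Nat.cast_nonneg n) goldenPhi_pos.le)

lemma Wfb_cast (n : ℕ) : ((Wf n + n : ℕ) : ℤ) = beattySeq (goldenPhi ^ 2) n := by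
  rw [← floor_sq, beattySeq, mul_comm]
  exact Int.natCast_floor_eq_floor
    (mul_nonneg (Nat.cast_nonneg n) (by nlinarith [goldenPhi_pos] : (0:ℝ) ≤ goldenPhi ^ 2))

lemma goldenPhi_conj : goldenPhi.HolderConjugate (goldenPhi ^ 2) := by
  rw [Real.holderConjugate_iff]
  constructor
  · exact one_lt_goldenPhi
  · have h := goldenPhi_sq
    have hpos := goldenPhi_pos
    field_simp
    nlinarith

open scoped symmDiff in
lemma beatty_symmdiff :
    {x | ∃ k > 0, beattySeq goldenPhi k = x} ∆ {x | ∃ k > 0, beattySeq (goldenPhi ^ 2) k = x}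
      = {n : ℤ | 0 < n} :=
  Irrational.beattySeq_symmDiff_beattySeq_pos goldenPhi_conj Real.goldenRatio_irrational

lemma beatty_ex (m : ℕ) (hm : 1 ≤ m) :
    (∃ k, 1 ≤ k ∧ Wf k = m) ∨ (∃ k, 1 ≤ k ∧ Wf k + k = m) := by
  have hmem : (m : ℤ) ∈ ({n : ℤ | 0 < n}) := by
    simp only [Set.mem_setOf_eq]; exact_mod_cast hm
  rw [← beatty_symmdiff, Set.mem_symmDiff] at hmem
  rcases hmem with ⟨⟨k, hk, hke⟩, -⟩ | ⟨⟨k, hk, hke⟩, -⟩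
  · left
    refine ⟨k.toNat, by omega, ?_⟩
    have : (k.toNat : ℤ) = k := Int.toNat_of_nonneg hk.le
    have h2 := Wf_cast k.toNat
    rw [this] at h2
    omega
  · right
    refine ⟨k.toNat, by omega, ?_⟩
    have : (k.toNat : ℤ) = k := Int.toNat_of_nonneg hk.le
    have h2 := Wfb_cast k.toNat
    rw [this] at h2
    omega

lemma beatty_disj (j k : ℕ) (hj : 1 ≤ j) (hk : 1 ≤ k) : Wf j ≠ Wf k + k := by
  intro he
  have hm : (0:ℤ) < ((Wf j : ℕ) : ℤ) := by
    have := le_Wf j; exact_mod_cast lt_of_lt_of_le hj this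
  have hmem : ((Wf j : ℕ) : ℤ) ∈ ({n : ℤ | 0 < n}) := hm
  rw [← beatty_symmdiff, Set.mem_symmDiff] at hmem
  have h1 : ((Wf j:ℕ):ℤ) ∈ {x | ∃ k > 0, beattySeq goldenPhi k = x} :=
    ⟨j, by exact_mod_cast hj, (Wf_cast j).symm⟩
  have h2 : ((Wf j:ℕ):ℤ) ∈ {x | ∃ k' > 0, beattySeq (goldenPhi ^ 2) k' = x} := by
    refine ⟨k, by exact_mod_cast hk, ?_⟩
    rw [← Wfb_cast k, ← he]
  rcases hmem with ⟨-, hb⟩ | ⟨-, hb⟩ <;> exact hb ‹_›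


lemma Wf_def (n : ℕ) : ⌊goldenPhi * n⌋₊ = Wf n := rfl

lemma Wf_inj {j k : ℕ} (h : Wf j = Wf k) : j = k := Wf_strictMono.injective h

lemma Wf_lt_iff {j k : ℕ} : Wf j < Wf k ↔ j < k := Wf_strictMono.lt_iff_lt

lemma Wfb_inj {j k : ℕ} (h : Wf j + j = Wf k + k) : j = k := by
  rcases Nat.lt_trichotomy j k with hl | he | hl
  · have := Wf_lt_iff.mpr hl; omega
  · exact he
  · have := Wf_lt_iff.mpr hl; omega

lemma Wf_eq_Wfb {j k : ℕ} (h : Wf j = Wf k + k) : j = 0 ∧ k = 0 := by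
  rcases Nat.eq_zero_or_pos k with rfl | hk
  · rw [Wf_zero] at h
    simp at h
    have := le_Wf j; constructor; omega; rfl
  · rcases Nat.eq_zero_or_pos j with rfl | hj
    · rw [Wf_zero] at h; have := le_Wf k; omega
    · exact absurd h (beatty_disj j k hj hk)

lemma mem_R2 {x y : ℕ} : (x,y) ∈ R2 ↔ (x = 0 ∧ y = 0) ∨ y = 2*x+1 ∨ x = 2*y+1 ∨
    (∃ n, x = 2*Wf n + 2 ∧ y = 2*(Wf n + n) + 2) ∨
    (∃ n, y = 2*Wf n + 2 ∧ x = 2*(Wf n + n) + 2) := by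
  simp only [R2, Set.mem_union, Set.mem_singleton_iff, Set.mem_setOf_eq, Prod.mk.injEq,
    floor_sq, Wf_def]
  constructor
  · rintro ((⟨h1,h2⟩|⟨n, (⟨h1,h2⟩|⟨h1,h2⟩)⟩)|⟨n, (⟨h1,h2⟩|⟨h1,h2⟩)⟩)
    · exact Or.inl ⟨h1, h2⟩
    · subst h1; exact Or.inr (Or.inl h2)
    · subst h2; exact Or.inr (Or.inr (Or.inl h1))
    · exact Or.inr (Or.inr (Or.inr (Or.inl ⟨n, h1, h2⟩)))
    · exact Or.inr (Or.inr (Or.inr (Or.inr ⟨n, h2, h1⟩)))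
  · rintro (⟨h1,h2⟩ | h | h | ⟨n, h1, h2⟩ | ⟨n, h1, h2⟩)
    · exact Or.inl (Or.inl ⟨h1, h2⟩)
    · exact Or.inl (Or.inr ⟨x, Or.inl ⟨rfl, h⟩⟩)
    · exact Or.inl (Or.inr ⟨y, Or.inr ⟨h, rfl⟩⟩)
    · exact Or.inr ⟨n, Or.inl ⟨h1, h2⟩⟩
    · exact Or.inr ⟨n, Or.inr ⟨h2, h1⟩⟩

lemma isOption_mk {u v x y : ℕ} : IsOption (u,v) (x,y) ↔
    (u < x ∧ v = y) ∨ (u = x ∧ v < y) ∨ (u < x ∧ v < y ∧ x - u = y - v) := Iff.rfl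

def S (p : ℕ × ℕ) : Set (ℕ × ℕ) := {q | IsOption q p ∧ q ∈ R2}

lemma S_fin (p : ℕ × ℕ) : (S p).Finite := by
  apply Set.Finite.subset ((Set.finite_Iic p.1).prod (Set.finite_Iic p.2))
  rintro ⟨u,v⟩ ⟨hopt, -⟩
  rcases hopt with ⟨h1,h2⟩ | ⟨h1,h2⟩ | ⟨h1,h2,h3⟩ <;>
    exact ⟨by simp; omega, by simp; omega⟩

lemma isP_iff (p : ℕ × ℕ) : IsP 2 p ↔ Set.ncard {q : ℕ × ℕ | ∃ _ : IsOption q p, IsP 2 q} < 2 := by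
  rw [IsP]

lemma mem_S {u v x y : ℕ} (h1 : IsOption (u,v) (x,y)) (h2 : (u,v) ∈ R2) : (u,v) ∈ S (x,y) :=
  ⟨h1, h2⟩

lemma dirA00 : S (0,0) ⊆ {((0:ℕ),(0:ℕ))} := by
  rintro ⟨u,v⟩ ⟨hopt, -⟩
  rcases hopt with ⟨h1,h2⟩ | ⟨h1,h2⟩ | ⟨h1,h2,h3⟩ <;> simp_all

lemma dirA22 : S (2,2) ⊆ {((0:ℕ),(0:ℕ))} := by
  rintro ⟨u,v⟩ ⟨hopt, hr⟩
  rw [mem_R2] at hr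
  simp only [Set.mem_singleton_iff, Prod.mk.injEq]
  rcases hopt with ⟨h1,h2⟩ | ⟨h1,h2⟩ | ⟨h1,h2,h3⟩ <;>
    rcases hr with ⟨e1,e2⟩ | e | e | ⟨n, e1, e2⟩ | ⟨n, e1, e2⟩ <;>
    simp only [] at * <;> omega

/-- Direction A for `p = (x, 2x+1)`. -/
lemma dirAodd (x : ℕ) : ∃ q0, S (x, 2*x+1) ⊆ {q0} := by
  have key : ∀ q0 : ℕ × ℕ,
      (∀ u v, IsOption (u,v) (x, 2*x+1) → (u,v) ∈ R2 → (u,v) = q0) →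
      S (x, 2*x+1) ⊆ {q0} := by
    rintro q0 hq ⟨u,v⟩ ⟨hopt, hr⟩
    exact hq u v hopt hr
  -- analysis of options
  have main : ∀ u v, IsOption (u,v) (x, 2*x+1) → (u,v) ∈ R2 →
      (u = x ∧ v < 2*x+1 ∧ (u,v) ∈ R2) := by
    intro u v hopt hr
    have hr' := mem_R2.mp hr
    rcases hopt with ⟨h1,h2⟩ | ⟨h1,h2⟩ | ⟨h1,h2,h3⟩
    · exfalso
      rcases hr' with ⟨e1,e2⟩ | e | e | ⟨n, e1, e2⟩ | ⟨n, e1, e2⟩ <;> omega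
    · exact ⟨h1, h2, hr⟩
    · exfalso
      rcases hr' with ⟨e1,e2⟩ | e | e | ⟨n, e1, e2⟩ | ⟨n, e1, e2⟩
      · omega
      · omega
      · omega
      · have := le_Wf n; omega
      · omega
  -- now uniqueness on the column
  rcases Nat.even_or_odd x with ⟨m, hm⟩ | ⟨m, hm⟩
  · -- x even, x = m + m
    rcases Nat.eq_zero_or_pos m with rfl | hmpos
    · -- x = 0
      refine ⟨(0,0), key _ ?_⟩
      intro u v hopt hr
      obtain ⟨hu, hv, hr2⟩ := main u v hopt hr
      rcases mem_R2.mp hr2 with ⟨e1,e2⟩ | e | e | ⟨n, e1, e2⟩ | ⟨n, e1, e2⟩ <;>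
        · simp only [Prod.mk.injEq]; omega
    · rcases Nat.eq_zero_or_pos (m - 1) with hm1 | hm1pos
      · -- x = 2
        refine ⟨(2,2), key _ ?_⟩
        intro u v hopt hr
        obtain ⟨hu, hv, hr2⟩ := main u v hopt hr
        rcases mem_R2.mp hr2 with ⟨e1,e2⟩ | e | e | ⟨n, e1, e2⟩ | ⟨n, e1, e2⟩
        · omega
        · simp only [Prod.mk.injEq]; omega
        · omega
        · have hn := le_Wf n
          have hW0 := Wf_zero
          simp only [Prod.mk.injEq]; omega
        · have hn := le_Wf n
          have hW0 := Wf_zero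
          simp only [Prod.mk.injEq]; omega
      · -- x = 2*(m-1)+2 with m-1 ≥ 1
        rcases beatty_ex (m-1) (by omega) with ⟨k, hk1, hk⟩ | ⟨k, hk1, hk⟩
        · refine ⟨(x, 2*(Wf k + k)+2), key _ ?_⟩
          intro u v hopt hr
          obtain ⟨hu, hv, hr2⟩ := main u v hopt hr
          rcases mem_R2.mp hr2 with ⟨e1,e2⟩ | e | e | ⟨n, e1, e2⟩ | ⟨n, e1, e2⟩
          · omega
          · omega
          · omega
          · -- u = 2 Wf n + 2, Wf n = m-1 = Wf k so n = k
            have hnk : n = k := Wf_inj (by omega)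
            rw [hnk] at e2
            simp only [Prod.mk.injEq]; omega
          · -- Wf n + n = m - 1 = Wf k : impossible since k ≥ 1
            exfalso
            have := Wf_eq_Wfb (j := k) (k := n) (by omega)
            omega
        · refine ⟨(x, 2*Wf k+2), key _ ?_⟩
          intro u v hopt hr
          obtain ⟨hu, hv, hr2⟩ := main u v hopt hr
          rcases mem_R2.mp hr2 with ⟨e1,e2⟩ | e | e | ⟨n, e1, e2⟩ | ⟨n, e1, e2⟩
          · omega
          · omega
          · omega
          · -- Wf n = m-1 = Wf k + k : impossible
            exfalso
            have := Wf_eq_Wfb (j := n) (k := k) (by omega)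
            omega
          · have hnk : n = k := Wfb_inj (by omega)
            rw [hnk] at e1
            simp only [Prod.mk.injEq]; omega
  · -- x odd, x = 2m+1
    refine ⟨(x, m), key _ ?_⟩
    intro u v hopt hr
    obtain ⟨hu, hv, hr2⟩ := main u v hopt hr
    rcases mem_R2.mp hr2 with ⟨e1,e2⟩ | e | e | ⟨n, e1, e2⟩ | ⟨n, e1, e2⟩ <;>
      · simp only [Prod.mk.injEq]; omega

/-- Direction A for even Wythoff-pair positions with n = m+1. -/
lemma dirAeven (m : ℕ) :
    S (2*Wf (m+1)+2, 2*(Wf (m+1)+(m+1))+2) ⊆ {((2*m+1 : ℕ), (4*m+3 : ℕ))} := by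
  rintro ⟨u,v⟩ ⟨hopt, hr⟩
  have hW := le_Wf (m+1)
  simp only [Set.mem_singleton_iff, Prod.mk.injEq]
  rcases hopt with ⟨h1,h2⟩ | ⟨h1,h2⟩ | ⟨h1,h2,h3⟩ <;>
    rcases mem_R2.mp hr with ⟨e1,e2⟩ | e | e | ⟨n, e1, e2⟩ | ⟨n, e1, e2⟩
  -- row cases
  · omega
  · omega
  · omega
  · exfalso
    have hnk : n = m+1 := Wfb_inj (by omega)
    rw [hnk] at e1 e2; omega
  · exfalso
    have := Wf_eq_Wfb (j := n) (k := m+1) (by omega)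
    omega
  -- column cases
  · omega
  · omega
  · omega
  · exfalso
    have hnk : n = m+1 := Wf_inj (by omega)
    rw [hnk] at e1 e2; omega
  · exfalso
    have := Wf_eq_Wfb (j := m+1) (k := n) (by omega)
    omega
  -- diagonal cases
  · omega
  · omega
  · omega
  · exfalso
    have hnk : n = m+1 := by omega
    rw [hnk] at e1 e2; omega
  · omega

lemma dirA (x y : ℕ) (hxy : x ≤ y) (h : (x,y) ∈ R2) : ∃ q0, S (x,y) ⊆ {q0} := by
  rcases mem_R2.mp h with ⟨e1,e2⟩ | e | e | ⟨n, e1, e2⟩ | ⟨n, e1, e2⟩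
  · subst e1; subst e2; exact ⟨(0,0), dirA00⟩
  · subst e; exact dirAodd x
  · exfalso; omega
  · subst e1; subst e2
    rcases n with _ | m
    · exact ⟨(0,0), by simpa [Wf_zero] using dirA22⟩
    · exact ⟨(2*m+1, 4*m+3), dirAeven m⟩
  · -- x = 2(Wf n + n)+2 ≤ y = 2 Wf n + 2 forces n = 0, x = y = 2
    have hn : n = 0 := by omega
    subst hn
    subst e1; subst e2
    exact ⟨(0,0), by simpa [Wf_zero] using dirA22⟩

lemma dirB (x y : ℕ) (hxy : x ≤ y) (h : (x,y) ∉ R2) :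
    ∃ q1 q2 : ℕ × ℕ, q1 ≠ q2 ∧ q1 ∈ S (x,y) ∧ q2 ∈ S (x,y) := by
  have h1 : ¬(x = 0 ∧ y = 0) := fun hc => h (mem_R2.mpr (Or.inl hc))
  have h2 : y ≠ 2*x+1 := fun hc => h (mem_R2.mpr (Or.inr (Or.inl hc)))
  have h3 : x ≠ 2*y+1 := fun hc => h (mem_R2.mpr (Or.inr (Or.inr (Or.inl hc))))
  have h4 : ∀ n, ¬(x = 2*Wf n+2 ∧ y = 2*(Wf n+n)+2) :=
    fun n hc => h (mem_R2.mpr (Or.inr (Or.inr (Or.inr (Or.inl ⟨n, hc.1, hc.2⟩)))))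
  have hW0 := Wf_zero
  rcases eq_or_lt_of_le hxy with heq | hlt
  · -- diagonal x = y
    subst heq
    have hx0 : x ≠ 0 := fun hc => h1 ⟨hc, hc⟩
    have hx2 : x ≠ 2 := fun hc => h4 0 ⟨by omega, by omega⟩
    rcases Nat.lt_or_ge x 3 with hx | hx
    · -- x = 1
      have hx1 : x = 1 := by omega
      subst hx1
      exact ⟨(0,1), (1,0), by simp only [ne_eq, Prod.mk.injEq]; omega,
        ⟨isOption_mk.mpr (by omega), mem_R2.mpr (Or.inr (Or.inl (by omega)))⟩,
        ⟨isOption_mk.mpr (by omega), mem_R2.mpr (Or.inr (Or.inr (Or.inl (by omega))))⟩⟩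
    · exact ⟨(0,0), (2,2), by simp only [ne_eq, Prod.mk.injEq]; omega,
        ⟨isOption_mk.mpr (by omega), mem_R2.mpr (Or.inl ⟨rfl, rfl⟩)⟩,
        ⟨isOption_mk.mpr (by omega),
          mem_R2.mpr (Or.inr (Or.inr (Or.inr (Or.inl ⟨0, by omega, by omega⟩))))⟩⟩
  · -- x < y
    rcases Nat.lt_or_ge x 2 with hxlt | hxge
    · rcases Nat.lt_or_ge x 1 with hx0 | hx0
      · -- x = 0
        have hx : x = 0 := by omega
        subst hx
        have hy : 2 ≤ y := by omega
        exact ⟨(0,0), (0,1), by simp only [ne_eq, Prod.mk.injEq]; omega,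
          ⟨isOption_mk.mpr (by omega), mem_R2.mpr (Or.inl ⟨rfl, rfl⟩)⟩,
          ⟨isOption_mk.mpr (by omega), mem_R2.mpr (Or.inr (Or.inl (by omega)))⟩⟩
      · -- x = 1
        have hx : x = 1 := by omega
        subst hx
        have hy : 2 ≤ y := by omega
        have hy3 : y ≠ 3 := by omega
        rcases Nat.lt_or_ge y 4 with hy4 | hy4
        · -- y = 2
          have hyv : y = 2 := by omega
          subst hyv
          exact ⟨(1,0), (0,1), by simp only [ne_eq, Prod.mk.injEq]; omega,
            ⟨isOption_mk.mpr (by omega), mem_R2.mpr (Or.inr (Or.inr (Or.inl (by omega))))⟩,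
            ⟨isOption_mk.mpr (by omega), mem_R2.mpr (Or.inr (Or.inl (by omega)))⟩⟩
        · exact ⟨(1,0), (1,3), by simp only [ne_eq, Prod.mk.injEq]; omega,
            ⟨isOption_mk.mpr (by omega), mem_R2.mpr (Or.inr (Or.inr (Or.inl (by omega))))⟩,
            ⟨isOption_mk.mpr (by omega), mem_R2.mpr (Or.inr (Or.inl (by omega)))⟩⟩
    · -- x ≥ 2
      rcases (by omega : y ≤ 2*x ∨ 2*x+2 ≤ y) with hy | hy
      · -- x < y ≤ 2x : the odd diagonal point is an option
        have hq1opt : IsOption (y-x-1, 2*(y-x)-1) (x,y) := isOption_mk.mpr (by omega)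
        have hq1r : (y-x-1, 2*(y-x)-1) ∈ R2 := mem_R2.mpr (Or.inr (Or.inl (by omega)))
        rcases Nat.even_or_odd x with ⟨m, hm⟩ | ⟨m, hm⟩
        · -- x even
          rcases Nat.even_or_odd y with ⟨b1, hb⟩ | ⟨b1, hb⟩
          · -- y even; a = m-1, b = b1-1, n = b1-m
            have hm1 : 1 ≤ m := by omega
            have hb2 : 2 ≤ b1 := by omega
            have hn1 : 1 ≤ b1 - m := by omega
            have hWne : Wf (b1-m) ≠ m-1 := fun he => h4 (b1-m) ⟨by omega, by omega⟩
            rcases Nat.lt_or_ge (Wf (b1-m)) (m-1) with hWa | hWa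
            · -- move to the even pair on the diagonal
              refine ⟨(y-x-1, 2*(y-x)-1), (2*Wf (b1-m)+2, 2*(Wf (b1-m)+(b1-m))+2),
                by simp only [ne_eq, Prod.mk.injEq]; omega, ⟨hq1opt, hq1r⟩,
                ⟨isOption_mk.mpr (by omega),
                 mem_R2.mpr (Or.inr (Or.inr (Or.inr (Or.inl ⟨b1-m, rfl, rfl⟩))))⟩⟩
            · have hWgt : m - 1 < Wf (b1-m) := by omega
              rcases Nat.lt_or_ge (m-1) 1 with ha0 | ha1
              · -- x = 2
                refine ⟨(y-x-1, 2*(y-x)-1), (2,2),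
                  by simp only [ne_eq, Prod.mk.injEq]; omega, ⟨hq1opt, hq1r⟩,
                  ⟨isOption_mk.mpr (by omega),
                   mem_R2.mpr (Or.inr (Or.inr (Or.inr (Or.inl ⟨0, by omega, by omega⟩))))⟩⟩
              · rcases beatty_ex (m-1) (by omega) with ⟨k, hk1, hk⟩ | ⟨k, hk1, hk⟩
                · have hkn : k < b1 - m := Wf_lt_iff.mp (by omega)
                  refine ⟨(y-x-1, 2*(y-x)-1), (x, 2*(Wf k+k)+2),
                    by simp only [ne_eq, Prod.mk.injEq]; omega, ⟨hq1opt, hq1r⟩,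
                    ⟨isOption_mk.mpr (by omega),
                     mem_R2.mpr (Or.inr (Or.inr (Or.inr (Or.inl ⟨k, by omega, by omega⟩))))⟩⟩
                · refine ⟨(y-x-1, 2*(y-x)-1), (x, 2*Wf k+2),
                    by simp only [ne_eq, Prod.mk.injEq]; omega, ⟨hq1opt, hq1r⟩,
                    ⟨isOption_mk.mpr (by omega),
                     mem_R2.mpr (Or.inr (Or.inr (Or.inr (Or.inr ⟨k, by omega, by omega⟩))))⟩⟩
          · -- y odd: row small point
            refine ⟨(y-x-1, 2*(y-x)-1), (b1, y),
              by simp only [ne_eq, Prod.mk.injEq]; omega, ⟨hq1opt, hq1r⟩,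
              ⟨isOption_mk.mpr (by omega), mem_R2.mpr (Or.inr (Or.inl (by omega)))⟩⟩
        · -- x odd: column small point
          refine ⟨(y-x-1, 2*(y-x)-1), (x, m),
            by simp only [ne_eq, Prod.mk.injEq]; omega, ⟨hq1opt, hq1r⟩,
            ⟨isOption_mk.mpr (by omega), mem_R2.mpr (Or.inr (Or.inr (Or.inl (by omega))))⟩⟩
      · -- y ≥ 2x+2 : two column moves
        have hq1opt : IsOption (x, 2*x+1) (x,y) := isOption_mk.mpr (by omega)
        have hq1r : (x, 2*x+1) ∈ R2 := mem_R2.mpr (Or.inr (Or.inl rfl))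
        rcases Nat.even_or_odd x with ⟨m, hm⟩ | ⟨m, hm⟩
        · rcases Nat.lt_or_ge m 2 with hm1 | hm1
          · -- x = 2
            refine ⟨(x, 2*x+1), (2,2), by simp only [ne_eq, Prod.mk.injEq]; omega,
              ⟨hq1opt, hq1r⟩,
              ⟨isOption_mk.mpr (by omega),
               mem_R2.mpr (Or.inr (Or.inr (Or.inr (Or.inl ⟨0, by omega, by omega⟩))))⟩⟩
          · rcases beatty_ex (m-1) (by omega) with ⟨k, hk1, hk⟩ | ⟨k, hk1, hk⟩
            · have hkm := le_Wf k
              refine ⟨(x, 2*x+1), (x, 2*(Wf k+k)+2),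
                by simp only [ne_eq, Prod.mk.injEq]; omega, ⟨hq1opt, hq1r⟩,
                ⟨isOption_mk.mpr (by omega),
                 mem_R2.mpr (Or.inr (Or.inr (Or.inr (Or.inl ⟨k, by omega, by omega⟩))))⟩⟩
            · refine ⟨(x, 2*x+1), (x, 2*Wf k+2),
                by simp only [ne_eq, Prod.mk.injEq]; omega, ⟨hq1opt, hq1r⟩,
                ⟨isOption_mk.mpr (by omega),
                 mem_R2.mpr (Or.inr (Or.inr (Or.inr (Or.inr ⟨k, by omega, by omega⟩))))⟩⟩
        · refine ⟨(x, 2*x+1), (x, m), by simp only [ne_eq, Prod.mk.injEq]; omega,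
            ⟨hq1opt, hq1r⟩,
            ⟨isOption_mk.mpr (by omega), mem_R2.mpr (Or.inr (Or.inr (Or.inl (by omega))))⟩⟩

lemma isOption_swap {q p : ℕ × ℕ} : IsOption q.swap p.swap ↔ IsOption q p := by
  obtain ⟨a,b⟩ := q; obtain ⟨c,d⟩ := p
  simp only [Prod.swap_prod_mk, isOption_mk]
  omega

lemma mem_R2_swap {x y : ℕ} : (y,x) ∈ R2 ↔ (x,y) ∈ R2 := by
  rw [mem_R2, mem_R2]
  constructor <;>
  · rintro (⟨e1,e2⟩ | e | e | ⟨n, e1, e2⟩ | ⟨n, e1, e2⟩)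
    · exact Or.inl ⟨e2, e1⟩
    · exact Or.inr (Or.inr (Or.inl e))
    · exact Or.inr (Or.inl e)
    · exact Or.inr (Or.inr (Or.inr (Or.inr ⟨n, e1, e2⟩)))
    · exact Or.inr (Or.inr (Or.inr (Or.inl ⟨n, e1, e2⟩)))

lemma S_swap (x y : ℕ) : S (y,x) = Prod.swap '' S (x,y) := by
  ext ⟨u,v⟩
  simp only [S, Set.mem_setOf_eq, Set.mem_image, Prod.exists, Prod.swap_prod_mk, Prod.mk.injEq]
  constructor
  · rintro ⟨ho, hr⟩
    exact ⟨v, u, ⟨isOption_swap (q := (v,u)) (p := (x,y)) |>.mp ho,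
      (mem_R2_swap (x := v) (y := u)).mp hr⟩, rfl, rfl⟩
  · rintro ⟨a, b, ⟨ho, hr⟩, rfl, rfl⟩
    exact ⟨isOption_swap (q := (a,b)) (p := (x,y)) |>.mpr ho,
      (mem_R2_swap (x := a) (y := b)).mpr hr⟩

lemma key (x y : ℕ) : (x,y) ∈ R2 ↔ (S (x,y)).ncard < 2 := by
  suffices hle : ∀ a b : ℕ, a ≤ b → ((a,b) ∈ R2 ↔ (S (a,b)).ncard < 2) by
    rcases le_total x y with hxy | hyx
    · exact hle x y hxy
    · have hiff := hle y x hyx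
      have hcard : (S (x,y)).ncard = (S (y,x)).ncard := by
        rw [S_swap y x, Set.ncard_image_of_injective _ Prod.swap_injective]
      rw [← mem_R2_swap (x := x) (y := y), hcard]
      exact hiff
  intro a b hab
  constructor
  · intro hmem
    obtain ⟨q0, hsub⟩ := dirA a b hab hmem
    have hle1 := Set.ncard_le_ncard hsub (Set.finite_singleton q0)
    rw [Set.ncard_singleton] at hle1
    omega
  · intro hcard
    by_contra hnot
    obtain ⟨q1, q2, hne, hq1, hq2⟩ := dirB a b hab hnot
    have hsub : ({q1, q2} : Set (ℕ × ℕ)) ⊆ S (a,b) := by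
      intro z hz
      rcases hz with rfl | hz
      · exact hq1
      · rw [Set.mem_singleton_iff] at hz; subst hz; exact hq2
    have h2' : ({q1, q2} : Set (ℕ × ℕ)).ncard = 2 := Set.ncard_pair hne
    have := Set.ncard_le_ncard hsub (S_fin (a,b))
    omega

/-- The P-positions of Blocking-2 Wythoff Nim are exactly R₂. -/
theorem blocking_two_wythoff : ∀ p : ℕ × ℕ, IsP 2 p ↔ p ∈ R2 := by
  have main : ∀ s : ℕ, ∀ p : ℕ × ℕ, p.1 + p.2 ≤ s → (IsP 2 p ↔ p ∈ R2) := by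
    intro s
    induction s using Nat.strong_induction_on with
    | _ s ih =>
      intro p hp
      rw [isP_iff]
      have hset : {q : ℕ × ℕ | ∃ _ : IsOption q p, IsP 2 q} = S p := by
        ext q
        simp only [Set.mem_setOf_eq, exists_prop, S]
        constructor
        · rintro ⟨ho, hP⟩
          exact ⟨ho, (ih (q.1+q.2) (lt_of_lt_of_le ho.sum_lt hp) q le_rfl).mp hP⟩
        · rintro ⟨ho, hr⟩
          exact ⟨ho, (ih (q.1+q.2) (lt_of_lt_of_le ho.sum_lt hp) q le_rfl).mpr hr⟩
      rw [hset]
      obtain ⟨x,y⟩ := p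
      exact (key x y).symm
  exact fun p => main (p.1+p.2) p le_rfl
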